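/- Let F : ℝ → ℝ be C¹ with F' > 0 on the relevant range, let κ > 0, N ≥ 1, and let ω : [0,∞) → ℝ^N be C¹. If (θ, ω) solves θ̇_α = ω_α and F'(ω_α) ω̇_α = (κ/N) Σ_β φ_{αβ} (ω_β − ω_α) cos(θ_β − θ_α) with ω_α(0) = G(ν_α + (κ/N) Σ_β φ_{αβ} sin(θ⁰_β − θ⁰_α)), then F(ω_α(t)) = ν_α + (κ/N) Σ_β φ_{αβ} sin(θ_β(t) − θ_α(t)) for all t ≥ 0 and all α, where G = F^{-1}. -/

import Mathlib

theorem second_order_reduces_to_first_order (N : ℕ) (hN : 1 ≤ N) (κ : ℝ) (hκ : 0 < κ)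
    (F G : ℝ → ℝ) (hF : ContDiff ℝ 1 F) (hF' : ∀ x, 0 < deriv F x)
    (hGF : ∀ x, G (F x) = x) (hFG : ∀ y, F (G y) = y)
    (φ : Fin N → Fin N → ℝ) (ν : Fin N → ℝ) (θ0 : Fin N → ℝ)
    (θ ω ω' : ℝ → Fin N → ℝ)
    (hθinit : ∀ α, θ 0 α = θ0 α)
    (hθ : ∀ t α, HasDerivAt (fun s => θ s α) (ω t α) t)
    (hω : ∀ t α, HasDerivAt (fun s => ω s α) (ω' t α) t)
    (heq : ∀ t α, deriv F (ω t α) * ω' t α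
      = κ / N * ∑ β, φ α β * (ω t β - ω t α) * Real.cos (θ t β - θ t α))
    (hω0 : ∀ α, ω 0 α = G (ν α + κ / N * ∑ β, φ α β * Real.sin (θ0 β - θ0 α))) :
    ∀ t, 0 ≤ t → ∀ α,
      F (ω t α) = ν α + κ / N * ∑ β, φ α β * Real.sin (θ t β - θ t α) := by
  intro t _ α
  set H : ℝ → ℝ := fun s =>
    F (ω s α) - κ / N * ∑ β, φ α β * Real.sin (θ s β - θ s α) with hHdef
  have hH : ∀ s, HasDerivAt H 0 s := by
    intro s
    have h1 : HasDerivAt (fun u => F (ω u α)) (deriv F (ω s α) * ω' s α) s :=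
      ((hF.differentiable one_ne_zero (ω s α)).hasDerivAt).comp s (hω s α)
    have h2 : HasDerivAt (fun u => κ / N * ∑ β, φ α β * Real.sin (θ u β - θ u α))
        (κ / N * ∑ β, φ α β * (Real.cos (θ s β - θ s α) * (ω s β - ω s α))) s := by
      apply HasDerivAt.const_mul
      apply HasDerivAt.fun_sum
      intro β _
      exact (((hθ s β).sub (hθ s α)).sin).const_mul (φ α β)
    have h3 := h1.sub h2
    have : deriv F (ω s α) * ω' s α -
        κ / N * ∑ β, φ α β * (Real.cos (θ s β - θ s α) * (ω s β - ω s α)) = 0 := by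
      rw [heq s α, sub_eq_zero]
      congr 1
      exact Finset.sum_congr rfl fun β _ => by ring
    rwa [this] at h3
  have hconst : H t = H 0 := by
    have hdiff : Differentiable ℝ H := fun s => (hH s).differentiableAt
    have hderiv : ∀ s, deriv H s = 0 := fun s => (hH s).deriv
    exact is_const_of_deriv_eq_zero hdiff hderiv t 0
  have hH0 : H 0 = ν α := by
    simp only [hHdef]
    rw [hω0 α, hFG]
    simp only [hθinit]
    ring
  have := hconst.trans hH0
  simp only [hHdef] at this
  linarith [this]
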